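/- Janson's first correlation inequality: let I be a finite set and let (ξ_i)_{i∈I} be independent random variables with values in {0,1} on a probability space. Let Ω be a finite family of nonempty subsets of I, and for ω ∈ Ω let E_ω be the event {ξ_i = 1 for all i ∈ ω}. Assume P(E_ω) ≤ 1/2 for every ω ∈ Ω. Then P(⋂_{ω∈Ω} E_ω^c) ≥ ∏_{ω∈Ω} P(E_ω^c). -/

import Mathlib

open MeasureTheory ProbabilityTheory Finset

private lemma aux_fkg {α : Type*} [DistribLattice α] [Fintype α] (μ f g : α → ℝ)
    (hμ0 : ∀ a, 0 ≤ μ a) (hf0 : ∀ a, 0 ≤ f a) (hg0 : ∀ a, 0 ≤ g a)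
    (hf : Antitone f) (hg : Antitone g)
    (hμ : ∀ a b, μ a * μ b ≤ μ (a ⊓ b) * μ (a ⊔ b)) (hsum : ∑ a, μ a = 1) :
    (∑ a, μ a * f a) * (∑ a, μ a * g a) ≤ ∑ a, μ a * (f a * g a) := by
  have h := four_functions_theorem_univ (fun a => μ a * f a) (fun a => μ a * g a)
    (fun a => μ a * (f a * g a)) μ
    (fun a => mul_nonneg (hμ0 a) (hf0 a)) (fun a => mul_nonneg (hμ0 a) (hg0 a))
    (fun a => mul_nonneg (hμ0 a) (mul_nonneg (hf0 a) (hg0 a))) hμ0 ?_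
  · simpa [hsum] using h
  · intro a b
    have h1 : f a * g b ≤ f (a ⊓ b) * g (a ⊓ b) :=
      mul_le_mul (hf inf_le_left) (hg inf_le_right) (hg0 b) (hf0 _)
    calc μ a * f a * (μ b * g b) = μ a * μ b * (f a * g b) := by ring
      _ ≤ μ (a ⊓ b) * μ (a ⊔ b) * (f (a ⊓ b) * g (a ⊓ b)) :=
          mul_le_mul (hμ a b) h1 (mul_nonneg (hf0 a) (hg0 b))
            (mul_nonneg (hμ0 _) (hμ0 _))
      _ = μ (a ⊓ b) * (f (a ⊓ b) * g (a ⊓ b)) * μ (a ⊔ b) := by ring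

private lemma aux_janson {α : Type*} [DistribLattice α] [Fintype α] (μ : α → ℝ)
    (hμ0 : ∀ a, 0 ≤ μ a) (hμ : ∀ a b, μ a * μ b ≤ μ (a ⊓ b) * μ (a ⊔ b))
    (hsum : ∑ a, μ a = 1)
    {ι : Type*} (S : Finset ι) (g : ι → α → ℝ)
    (hg0 : ∀ ω a, 0 ≤ g ω a) (hganti : ∀ ω, Antitone (g ω)) :
    ∏ ω ∈ S, ∑ a, μ a * g ω a ≤ ∑ a, μ a * ∏ ω ∈ S, g ω a := by
  classical
  induction S using Finset.cons_induction with
  | empty => simp [hsum]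
  | cons σ S' hσ ih =>
    rw [Finset.prod_cons]
    have hgprod0 : ∀ a, 0 ≤ ∏ ω ∈ S', g ω a := fun a =>
      Finset.prod_nonneg fun ω _ => hg0 ω a
    have hgprodanti : Antitone fun a => ∏ ω ∈ S', g ω a := by
      intro a b hab
      exact Finset.prod_le_prod (fun ω _ => hg0 ω b) (fun ω _ => hganti ω hab)
    have h1 : (∑ a, μ a * g σ a) * ∏ ω ∈ S', ∑ a, μ a * g ω a ≤
        (∑ a, μ a * g σ a) * ∑ a, μ a * ∏ ω ∈ S', g ω a := by
      refine mul_le_mul_of_nonneg_left ih ?_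
      exact Finset.sum_nonneg fun a _ => mul_nonneg (hμ0 a) (hg0 σ a)
    refine h1.trans ?_
    have h2 := aux_fkg μ (g σ) (fun a => ∏ ω ∈ S', g ω a) hμ0 (hg0 σ) hgprod0
      (hganti σ) hgprodanti hμ hsum
    refine h2.trans_eq ?_
    refine Finset.sum_congr rfl fun a _ => ?_
    rw [Finset.prod_cons]

/-- Janson's first correlation inequality: if `(ξ_i)_{i ∈ I}` are independent `{0,1}`-valued
random variables, `S` is a finite family of nonempty subsets of `I`, `E_ω = {ξ_i = 1, ∀ i ∈ ω}`
and `P(E_ω) ≤ 1/2` for each `ω ∈ S`, then `P(⋂_{ω ∈ S} E_ωᶜ) ≥ ∏_{ω ∈ S} P(E_ωᶜ)`. -/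
theorem stmt_7 (I : Type*) [Fintype I] [DecidableEq I]
    (Ω : Type*) [MeasureSpace Ω] [IsProbabilityMeasure (ℙ : Measure Ω)]
    (ξ : I → Ω → Bool) (hmeas : ∀ i, Measurable (ξ i))
    (hindep : iIndepFun ξ ℙ)
    (S : Finset (Finset I)) (hne : ∀ ω ∈ S, ω.Nonempty)
    (hhalf : ∀ ω ∈ S, (ℙ {x | ∀ i ∈ ω, ξ i x = true}).toReal ≤ 1 / 2) :
    ∏ ω ∈ S, (ℙ ({x | ∀ i ∈ ω, ξ i x = true}ᶜ)).toReal ≤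
      (ℙ (⋂ ω ∈ S, {x | ∀ i ∈ ω, ξ i x = true}ᶜ)).toReal := by
  classical
  set T : Ω → (I → Bool) := fun x i => ξ i x with hTdef
  have hT : Measurable T := measurable_pi_lambda _ hmeas
  set μ : (I → Bool) → ℝ := fun a => (ℙ (T ⁻¹' {a})).toReal with hμdef
  have hμ0 : ∀ a, 0 ≤ μ a := fun a => ENNReal.toReal_nonneg
  -- every singleton preimage decomposes as a product by independence
  have hsingle : ∀ a : I → Bool, ℙ (T ⁻¹' {a}) = ∏ i, ℙ (ξ i ⁻¹' {a i}) := by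
    intro a
    have h1 : T ⁻¹' {a} = ⋂ i, ξ i ⁻¹' {a i} := by
      ext x
      simp [hTdef, funext_iff]
    rw [h1]
    exact hindep.meas_iInter fun i => ⟨{a i}, trivial, rfl⟩
  -- key: probabilities of preimages as sums
  have key : ∀ B : Set (I → Bool),
      (ℙ (T ⁻¹' B)).toReal = ∑ a, μ a * Set.indicator B 1 a := by
    intro B
    have hB : T ⁻¹' B = ⋃ a ∈ Finset.univ.filter (· ∈ B), T ⁻¹' {a} := by
      ext x
      simp
    rw [hB, measure_biUnion_finset]
    · rw [ENNReal.toReal_sum (fun a _ => measure_ne_top _ _)]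
      rw [Finset.sum_filter]
      refine Finset.sum_congr rfl fun a _ => ?_
      by_cases h : a ∈ B <;> simp [h, hμdef]
    · intro a _ b hb hab
      refine Set.disjoint_left.2 fun x hxa hxb => ?_
      exact hab (by rw [← hxa, ← hxb] : a = b)
    · intro a _
      exact hT (measurableSet_singleton a)
  have hsum : ∑ a, μ a = 1 := by
    have := key Set.univ
    simpa using this.symm
  -- log-supermodularity of μ (in fact an equality)
  have hμsup : ∀ a b, μ a * μ b ≤ μ (a ⊓ b) * μ (a ⊔ b) := by
    intro a b
    have hEN : ℙ (T ⁻¹' {a}) * ℙ (T ⁻¹' {b}) =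
        ℙ (T ⁻¹' {a ⊓ b}) * ℙ (T ⁻¹' {a ⊔ b}) := by
      simp only [hsingle, ← Finset.prod_mul_distrib]
      refine Finset.prod_congr rfl fun i _ => ?_
      have ha : (a ⊓ b) i = a i ⊓ b i := rfl
      have hb' : (a ⊔ b) i = a i ⊔ b i := rfl
      rw [ha, hb']
      cases hai : a i <;> cases hbi : b i <;> simp [mul_comm]
    have : μ a * μ b = μ (a ⊓ b) * μ (a ⊔ b) := by
      simp only [hμdef, ← ENNReal.toReal_mul, hEN]
    exact this.le
  -- the events as preimages
  set A : Finset I → Set (I → Bool) := fun ω => {a | ∀ i ∈ ω, a i = true} with hAdef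
  have hpre : ∀ ω : Finset I, {x | ∀ i ∈ ω, ξ i x = true} = T ⁻¹' A ω := fun ω => rfl
  -- indicators of complements of the A ω are antitone
  set g : Finset I → (I → Bool) → ℝ := fun ω => Set.indicator (A ω)ᶜ 1 with hgdef
  have hg0 : ∀ ω a, 0 ≤ g ω a := fun ω a => Set.indicator_nonneg (fun _ _ => zero_le_one) a
  have hganti : ∀ ω, Antitone (g ω) := by
    intro ω a b hab
    by_cases hbB : b ∈ (A ω)ᶜ
    · have haB : a ∈ (A ω)ᶜ := by
        simp only [Set.mem_compl_iff, hAdef, Set.mem_setOf_eq] at hbB ⊢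
        intro ha
        refine hbB fun i hi => ?_
        have h := hab i
        rw [ha i hi] at h
        revert h
        cases b i <;> simp
      simp [hgdef, hbB, haB]
    · simp only [hgdef]
      rw [Set.indicator_of_notMem hbB]
      exact hg0 ω a
  -- main computation
  have hmain := aux_janson μ hμ0 hμsup hsum S g hg0 hganti
  have hLHS : ∏ ω ∈ S, (ℙ ({x | ∀ i ∈ ω, ξ i x = true}ᶜ)).toReal =
      ∏ ω ∈ S, ∑ a, μ a * g ω a := by
    refine Finset.prod_congr rfl fun ω _ => ?_
    rw [hpre ω, ← Set.preimage_compl, key]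
  have hRHS : (ℙ (⋂ ω ∈ S, {x | ∀ i ∈ ω, ξ i x = true}ᶜ)).toReal =
      ∑ a, μ a * ∏ ω ∈ S, g ω a := by
    have h1 : (⋂ ω ∈ S, {x | ∀ i ∈ ω, ξ i x = true}ᶜ) = T ⁻¹' (⋂ ω ∈ S, (A ω)ᶜ) := by
      simp only [hpre, ← Set.preimage_compl, Set.preimage_iInter]
    rw [h1, key]
    refine Finset.sum_congr rfl fun a _ => ?_
    congr 1
    by_cases h : a ∈ ⋂ ω ∈ S, (A ω)ᶜ
    · rw [Set.indicator_of_mem h]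
      simp only [Set.mem_iInter] at h
      rw [Finset.prod_eq_one fun ω hω => ?_]
      · rfl
      · simp [hgdef, Set.indicator_of_mem (h ω hω)]
    · rw [Set.indicator_of_notMem h]
      simp only [Set.mem_iInter, not_forall] at h
      obtain ⟨ω, hωS, hω⟩ := h
      exact (Finset.prod_eq_zero hωS (by simp [hgdef, Set.indicator_of_notMem hω])).symm
  rw [hLHS, hRHS]
  exact hmain
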